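/- For every integer d ≥ 0 there exists an irreducible polynomial P ∈ ℤ[T,Y] with deg_T(P) = 2^{d+1} such that for every polynomial M ∈ ℤ[Y] of degree ≤ d, the polynomial P(M(Y), Y) is divisible by 2 in ℤ[Y] (hence reducible in ℤ[Y]). -/

import Mathlib

open Polynomial

theorem stmt_12 (d : ℕ) :
    ∃ P : Polynomial (Polynomial ℤ), Irreducible P ∧ P.natDegree = 2 ^ (d + 1) ∧
      ∀ M : Polynomial ℤ, M.natDegree ≤ d → (2 : Polynomial ℤ) ∣ P.eval M := by
  classical
  set N : ℕ := 2 ^ (d + 1) with hN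
  have hNpos : 0 < N := pow_pos (by norm_num) _
  set φ : (Fin (d+1) → Fin 2) → Polynomial ℤ :=
    fun f => ∑ i : Fin (d+1), C ((f i : ℕ) : ℤ) * X ^ (i : ℕ) with hφ
  set Q : Polynomial (Polynomial ℤ) :=
    ∏ f : (Fin (d+1) → Fin 2), (X - C (φ f)) with hQ
  have hQmonic : Q.Monic := monic_prod_of_monic _ _ fun f _ => monic_X_sub_C _
  have hQdeg : Q.natDegree = N := by
    rw [hQ, natDegree_prod _ _ (fun f _ => X_sub_C_ne_zero _)]
    simp [hN, pow_succ]
  have hQdeg' : Q.degree = (N : WithBot ℕ) := by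
    rw [degree_eq_natDegree hQmonic.ne_zero, hQdeg]
  -- the polynomial P
  set P : Polynomial (Polynomial ℤ) := C 3 * Q - C 2 * X ^ N + C 6 with hP
  have hC6 : (C 6 : Polynomial (Polynomial ℤ)) = C 2 * C 3 := by
    rw [← C_mul]; norm_num
  have hc2 : (C (2 : Polynomial ℤ) : Polynomial (Polynomial ℤ)) = 2 := map_ofNat C 2
  have hc3 : (C (3 : Polynomial ℤ) : Polynomial (Polynomial ℤ)) = 3 := map_ofNat C 3
  have hPQ : P = Q + C 2 * (Q - X ^ N + C 3) := by rw [hP, hC6, hc2, hc3]; ring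
  -- degree of the perturbation
  have hdegR : (C 2 * (Q - X ^ N + C 3)).degree < Q.degree := by
    have h1 : (Q - X ^ N).degree < Q.degree := by
      apply degree_sub_lt
      · rw [hQdeg', degree_X_pow]
      · exact hQmonic.ne_zero
      · rw [hQmonic.leadingCoeff, (monic_X_pow N).leadingCoeff]
    have h2 : (Q - X ^ N + C 3).degree < Q.degree := by
      refine lt_of_le_of_lt (degree_add_le _ _) (max_lt h1 ?_)
      refine lt_of_le_of_lt degree_C_le ?_
      rw [hQdeg']
      exact_mod_cast WithBot.coe_lt_coe.mpr hNpos
    calc (C 2 * (Q - X ^ N + C 3)).degree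
        ≤ (C 2 : Polynomial (Polynomial ℤ)).degree + (Q - X ^ N + C 3).degree :=
          degree_mul_le _ _
      _ ≤ 0 + (Q - X ^ N + C 3).degree := add_le_add degree_C_le le_rfl
      _ = (Q - X ^ N + C 3).degree := by rw [zero_add]
      _ < Q.degree := h2
  have hPdegEq : P.degree = Q.degree := by
    rw [hPQ]; exact degree_add_eq_left_of_degree_lt hdegR
  have hPdeg : P.natDegree = N := by
    rw [natDegree_eq_of_degree_eq hPdegEq, hQdeg]
  have hPmonic : P.Monic := by
    rw [hPQ]; exact hQmonic.add_of_left hdegR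
  -- Q has zero constant coefficient
  have hQ0 : Q.coeff 0 = 0 := by
    rw [coeff_zero_eq_eval_zero, hQ, eval_prod]
    refine Finset.prod_eq_zero (Finset.mem_univ (fun _ => 0)) ?_
    simp [hφ]
  have hP0 : P.coeff 0 = 6 := by
    rw [hP]
    simp [coeff_X_pow, hQ0, hNpos.ne]
  -- Eisenstein at (3)
  have hprime3 : Prime (3 : Polynomial ℤ) := by
    rw [← map_ofNat (C : ℤ →+* Polynomial ℤ) 3, Polynomial.prime_C_iff]
    exact Int.prime_three
  have hspanprime : (Ideal.span {(3 : Polynomial ℤ)}).IsPrime :=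
    (Ideal.span_singleton_prime hprime3.ne_zero).mpr hprime3
  have hC3 : (C 3 : Polynomial (Polynomial ℤ)) = C ((3 : Polynomial ℤ)) := by norm_num
  have hEis : P.IsEisensteinAt (Ideal.span {(3 : Polynomial ℤ)}) := by
    constructor
    · rw [hPmonic.leadingCoeff, Ideal.mem_span_singleton]
      intro hdvd
      exact hprime3.not_unit (isUnit_of_dvd_one hdvd)
    · intro n hn
      rw [hPdeg] at hn
      rw [Ideal.mem_span_singleton, hP]
      simp only [coeff_add, coeff_sub, coeff_C_mul, coeff_X_pow, coeff_C]
      rw [if_neg (by omega : ¬ n = N)]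
      have h6 : (3 : Polynomial ℤ) ∣ (if n = 0 then (6 : Polynomial ℤ) else 0) := by
        split
        · exact ⟨2, by norm_num⟩
        · exact dvd_zero _
      exact dvd_add (dvd_sub (Dvd.intro _ rfl) (by simp)) h6
    · rw [hP0, Ideal.span_singleton_pow, Ideal.mem_span_singleton]
      intro hdvd
      have h2 : ((3:Polynomial ℤ) ^ 2).eval 0 ∣ (6 : Polynomial ℤ).eval 0 := by
        exact_mod_cast map_dvd (evalRingHom (0:ℤ)) hdvd
      simp at h2
  have hPirr : Irreducible P :=
    hEis.irreducible hspanprime hPmonic.isPrimitive (by rw [hPdeg]; exact hNpos)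
  -- divisibility
  refine ⟨P, hPirr, hPdeg, ?_⟩
  intro M hM
  have key : (2 : Polynomial ℤ) ∣ Q.eval M := by
    set f : Fin (d+1) → Fin 2 := fun i => ⟨(M.coeff i % 2).toNat, by omega⟩ with hf
    have hdvd : (2 : Polynomial ℤ) ∣ (M - φ f) := by
      rw [show (2 : Polynomial ℤ) = C 2 by norm_num, C_dvd_iff_dvd_coeff]
      intro j
      rw [coeff_sub]
      by_cases hj : j < d + 1
      · have hcoeff : (φ f).coeff j = ((f ⟨j, hj⟩ : ℕ) : ℤ) := by
          rw [hφ]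
          simp only [finset_sum_coeff, coeff_C_mul, coeff_X_pow]
          rw [Finset.sum_eq_single (⟨j, hj⟩ : Fin (d+1))]
          · simp
          · intro b _ hb
            rw [if_neg, mul_zero]
            intro h
            exact hb (Fin.ext h.symm)
          · simp
        rw [hcoeff, hf]
        simp only
        rw [Int.toNat_of_nonneg (Int.emod_nonneg _ (by norm_num))]
        omega
      · have h1 : M.coeff j = 0 :=
          coeff_eq_zero_of_natDegree_lt (lt_of_le_of_lt hM (by omega))
        have h2 : (φ f).coeff j = 0 := by
          rw [hφ]
          simp only [finset_sum_coeff, coeff_C_mul, coeff_X_pow]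
          refine Finset.sum_eq_zero fun b _ => ?_
          rw [if_neg (by omega : ¬ j = (b : ℕ)), mul_zero]
        rw [h1, h2]
        simp
    have hev : Q.eval M = ∏ g : (Fin (d+1) → Fin 2), (M - φ g) := by
      rw [hQ, eval_prod]; simp
    rw [hev]
    exact dvd_trans hdvd (Finset.dvd_prod_of_mem _ (Finset.mem_univ f))
  rw [hPQ]
  simp only [eval_add, eval_mul, eval_C]
  exact dvd_add key (dvd_mul_right 2 _)
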